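/- Let T and S be bounded linear operators on a complex Banach space E, and suppose there exists a nonzero bounded linear operator X on E with X∘T = S∘X. If T has rich point spectrum, then int σ_p(T) ⊆ clos σ_p(S), i.e., the interior of the point spectrum of T is contained in the closure of the point spectrum of S. -/

import Mathlib

open Metric

/-- The point spectrum of a bounded linear operator. -/
def pointSpectrum {E : Type*} [NormedAddCommGroup E] [NormedSpace ℂ E]
    (T : E →L[ℂ] E) : Set ℂ :=
  {z : ℂ | ∃ f : E, f ≠ 0 ∧ T f = z • f}

/-- An operator has rich point spectrum if the interior of its point spectrum is
nonempty and for every open disc contained in the point spectrum, the union of the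
corresponding eigenspaces has dense linear span. -/
def HasRichPointSpectrum {E : Type*} [NormedAddCommGroup E] [NormedSpace ℂ E]
    (T : E →L[ℂ] E) : Prop :=
  (interior (pointSpectrum T)).Nonempty ∧
    ∀ (c : ℂ) (r : ℝ), 0 < r → Metric.ball c r ⊆ pointSpectrum T →
      Dense (↑(Submodule.span ℂ {f : E | ∃ z ∈ Metric.ball c r, T f = z • f}) : Set E)

theorem stmt4 {E : Type*} [NormedAddCommGroup E] [NormedSpace ℂ E] [CompleteSpace E]
    (T S : E →L[ℂ] E) (hT : HasRichPointSpectrum T)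
    (X : E →L[ℂ] E) (hX : X ≠ 0) (hXTS : X.comp T = S.comp X) :
    interior (pointSpectrum T) ⊆ closure (pointSpectrum S) := by
  intro z hz
  by_contra hzS
  rw [Metric.mem_closure_iff] at hzS
  push_neg at hzS
  obtain ⟨ε, hε, hεS⟩ := hzS
  obtain ⟨r, hr, hrT⟩ := Metric.isOpen_iff.mp isOpen_interior z hz
  set δ := min ε r with hδdef
  have hδ : 0 < δ := lt_min hε hr
  have hsub : ball z δ ⊆ pointSpectrum T :=
    (ball_subset_ball (min_le_right _ _)).trans (hrT.trans interior_subset)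
  have hdense := hT.2 z δ hδ hsub
  have hker : ∀ f ∈ {f : E | ∃ w ∈ ball z δ, T f = w • f}, X f = 0 := by
    rintro f ⟨w, hw, hf⟩
    by_contra hXf
    have hcomm : X (T f) = S (X f) := by
      have := congrFun (congrArg DFunLike.coe hXTS) f
      simpa using this
    have hSX : S (X f) = w • X f := by
      rw [← hcomm, hf, map_smul]
    have hwS : w ∈ pointSpectrum S := ⟨X f, hXf, hSX⟩
    have hdist : dist z w < ε := by
      rw [dist_comm]
      exact lt_of_lt_of_le (mem_ball.mp hw) (min_le_left _ _)
    exact absurd hdist (not_lt.mpr (hεS w hwS))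
  have hspan : Submodule.span ℂ {f : E | ∃ w ∈ ball z δ, T f = w • f} ≤ LinearMap.ker X :=
    Submodule.span_le.mpr fun f hf => LinearMap.mem_ker.mpr (by exact hker f hf)
  have hXzero : X = 0 := by
    have heq : (X : E → E) = (0 : E →L[ℂ] E) :=
      Continuous.ext_on hdense X.continuous (0 : E →L[ℂ] E).continuous
        (fun f hf => hspan hf)
    ext x
    exact congrFun heq x
  exact hX hXzero
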